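/- Let H be a finite-dimensional commutative semisimple C-algebra with a basis {c_λ} indexed by a finite poset Λ such that for every λ, the spans H^λ = span{c_μ : μ ≤ λ} and H^{λ-} = span{c_μ : μ < λ} are ideals of H. Then H has a complete set {e_λ : λ ∈ Λ} of primitive orthogonal idempotents such that the transition matrix from {c_λ} to {e_λ} is lower triangular: c_λ = Σ_{κ ≤ λ} A_{λκ} e_κ for some scalars A_{λκ}. -/

import Mathlib

lemma exists_idem_gen {H : Type*} [CommRing H] [IsSemisimpleRing H] (I : Ideal H) :
    ∃ e ∈ I, ∀ x ∈ I, e * x = x := by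
  obtain ⟨J, hJ⟩ := exists_isCompl I
  obtain ⟨e, he, f, hf, hef⟩ :=
    Submodule.mem_sup.1 (by rw [hJ.sup_eq_top]; exact Submodule.mem_top : (1:H) ∈ I ⊔ J)
  refine ⟨e, he, fun x hx => ?_⟩
  have hfx : f * x = x - e * x := by linear_combination congrArg (· * x) hef
  have h1 : f * x ∈ I := by
    rw [hfx]; exact sub_mem hx (Ideal.mul_mem_right x I he)
  have h2 : f * x ∈ J := Ideal.mul_mem_right x J hf
  have h0 : f * x = 0 := by
    have hmem : f * x ∈ I ⊓ J := ⟨h1, h2⟩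
    rw [hJ.inf_eq_bot] at hmem; simpa using hmem
  rw [h0] at hfx; linear_combination hfx

lemma sq_eq_zero' {H : Type*} [CommRing H] [IsSemisimpleRing H] {x : H}
    (h : x * x = 0) : x = 0 := by
  obtain ⟨e, he, hgen⟩ := exists_idem_gen (Ideal.span {x})
  obtain ⟨a, ha⟩ := Ideal.mem_span_singleton'.1 he
  have hee : e * e = e := hgen e he
  have he0 : e = 0 := by rw [← hee, ← ha]; linear_combination (a * a) * h
  have hx2 := hgen x (Ideal.mem_span_singleton_self x)
  rw [he0, zero_mul] at hx2; exact hx2.symm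

/-- let `H` be a finite-dimensional commutative semisimple `ℂ`-algebra
with a basis `{c_λ}` indexed by a finite poset `Λ`, such that for every `λ` the spans
of `{c_μ : μ ≤ λ}` and of `{c_μ : μ < λ}` are ideals of `H`.  Then `H` has a complete
set of primitive (i.e. nonzero, pairwise orthogonal, summing to `1`) idempotents
`{e_λ}` such that the transition matrix from `{c_λ}` to `{e_λ}` is lower triangular:
`c_λ ∈ span{e_κ : κ ≤ λ}` for every `λ`. -/
theorem idempotents_triangular (Λ : Type*) [Fintype Λ] [PartialOrder Λ]
    (H : Type*) [CommRing H] [Algebra ℂ H] [IsSemisimpleRing H] [FiniteDimensional ℂ H]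
    (b : Module.Basis Λ ℂ H)
    (hideal : ∀ lam : Λ, ∀ h : H, ∀ x ∈ Submodule.span ℂ (⇑b '' {μ | μ ≤ lam}),
      h * x ∈ Submodule.span ℂ (⇑b '' {μ | μ ≤ lam}))
    (hideal' : ∀ lam : Λ, ∀ h : H, ∀ x ∈ Submodule.span ℂ (⇑b '' {μ | μ < lam}),
      h * x ∈ Submodule.span ℂ (⇑b '' {μ | μ < lam})) :
    ∃ e : Λ → H,
      (∀ lam, IsIdempotentElem (e lam)) ∧
      (∀ lam mu, lam ≠ mu → e lam * e mu = 0) ∧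
      (∑ lam, e lam) = 1 ∧
      (∀ lam, e lam ≠ 0) ∧
      (∀ lam, b lam ∈ Submodule.span ℂ (e '' {κ | κ ≤ lam})) := by
  classical
  rcases isEmpty_or_nonempty Λ with hΛ | hΛ
  · haveI : Subsingleton H := b.repr.toEquiv.subsingleton
    exact ⟨fun _ => 0, fun lam => absurd trivial (hΛ.elim lam),
      fun lam => absurd trivial (hΛ.elim lam), Subsingleton.elim _ _,
      fun lam => absurd trivial (hΛ.elim lam), fun lam => absurd trivial (hΛ.elim lam)⟩
  -- ideals
  set S : Λ → Set H := fun lam => ⇑b '' {μ | μ ≤ lam} with hS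
  set S' : Λ → Set H := fun lam => ⇑b '' {μ | μ < lam} with hS'
  let J : Λ → Ideal H := fun lam =>
    { carrier := (Submodule.span ℂ (S lam) : Set H)
      add_mem' := fun ha hb => Submodule.add_mem _ ha hb
      zero_mem' := Submodule.zero_mem _
      smul_mem' := fun h x hx => by simpa [smul_eq_mul] using hideal lam h x hx }
  let J' : Λ → Ideal H := fun lam =>
    { carrier := (Submodule.span ℂ (S' lam) : Set H)
      add_mem' := fun ha hb => Submodule.add_mem _ ha hb
      zero_mem' := Submodule.zero_mem _
      smul_mem' := fun h x hx => by simpa [smul_eq_mul] using hideal' lam h x hx }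
  have memJ : ∀ lam (x : H), x ∈ J lam ↔ x ∈ Submodule.span ℂ (S lam) := fun _ _ => Iff.rfl
  have memJ' : ∀ lam (x : H), x ∈ J' lam ↔ x ∈ Submodule.span ℂ (S' lam) := fun _ _ => Iff.rfl
  choose f hfmem hfgen using fun lam => exists_idem_gen (J lam)
  choose f' hfmem' hfgen' using fun lam => exists_idem_gen (J' lam)
  set e : Λ → H := fun lam => f lam - f' lam with he_def
  have hsub : ∀ lam, Submodule.span ℂ (S' lam) ≤ Submodule.span ℂ (S lam) := fun lam =>
    Submodule.span_mono (Set.image_mono fun μ h => le_of_lt h)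
  have heJ : ∀ lam, e lam ∈ Submodule.span ℂ (S lam) := fun lam =>
    sub_mem ((memJ lam _).1 (hfmem lam)) (hsub lam ((memJ' lam _).1 (hfmem' lam)))
  have hkill : ∀ lam (x : H), x ∈ Submodule.span ℂ (S' lam) → e lam * x = 0 := by
    intro lam x hx
    have h1 := hfgen lam x ((memJ lam x).2 (hsub lam hx))
    have h2 := hfgen' lam x ((memJ' lam x).2 hx)
    rw [he_def]; linear_combination h1 - h2
  have hidem : ∀ lam, IsIdempotentElem (e lam) := by
    intro lam
    have h1 := hfgen lam (f lam) (hfmem lam)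
    have hf'J : f' lam ∈ J lam := (memJ lam _).2 (hsub lam ((memJ' lam _).1 (hfmem' lam)))
    have h2 := hfgen lam (f' lam) hf'J
    have h3 := hfgen' lam (f' lam) (hfmem' lam)
    show e lam * e lam = e lam
    rw [he_def]; linear_combination h1 - 2 * h2 + h3
  -- products land in intersection supports
  have hprod : ∀ (ka la : Λ) (x : H), x ∈ Submodule.span ℂ (S la) →
      e ka * x ∈ Submodule.span ℂ (⇑b '' ({ν | ν ≤ ka} ∩ {ν | ν ≤ la})) := by
    intro ka la x hx
    have h1 : e ka * x ∈ Submodule.span ℂ (S ka) :=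
      (memJ ka _).1 (Ideal.mul_mem_right x (J ka) ((memJ ka _).2 (heJ ka)))
    have h2 : e ka * x ∈ Submodule.span ℂ (S la) :=
      (memJ la _).1 (Ideal.mul_mem_left (J la) (e ka) ((memJ la x).2 hx))
    rw [hS] at h1 h2
    rw [Module.Basis.mem_span_image] at h1 h2 ⊢
    exact Set.subset_inter h1 h2
  have horth : ∀ lam mu, lam ≠ mu → e lam * e mu = 0 := by
    intro lam mu hne
    have hp := hprod lam mu (e mu) (heJ mu)
    have hsup : e lam * e mu ∈ Submodule.span ℂ (S' lam) ⊔ Submodule.span ℂ (S' mu) := by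
      refine Submodule.span_le.2 ?_ hp
      rintro _ ⟨ν, ⟨h1, h2⟩, rfl⟩
      rcases eq_or_lt_of_le (h1 : ν ≤ lam) with rfl | hlt
      · exact Submodule.mem_sup_right (Submodule.subset_span ⟨ν, lt_of_le_of_ne h2 hne, rfl⟩)
      · exact Submodule.mem_sup_left (Submodule.subset_span ⟨ν, hlt, rfl⟩)
    obtain ⟨x, hx, y, hy, hxy⟩ := Submodule.mem_sup.1 hsup
    have hx0 : e lam * x = 0 := hkill lam x hx
    have hy0 : e mu * y = 0 := hkill mu y hy
    have hsq : (e lam * e mu) * (e lam * e mu) = 0 := by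
      have : (e lam * e mu) * (x + y) = 0 := by linear_combination (e mu) * hx0 + (e lam) * hy0
      rw [hxy] at this; exact this
    exact sq_eq_zero' hsq
  have hself : ∀ lam, b lam ∈ Submodule.span ℂ (S lam) := fun lam => by
    rw [hS]; exact b.self_mem_span_image.2 (le_refl lam)
  have hne0 : ∀ lam, e lam ≠ 0 := by
    intro lam h0
    have hff : f lam = f' lam := sub_eq_zero.1 h0
    have hb1 : f lam * b lam = b lam := hfgen lam (b lam) ((memJ lam _).2 (hself lam))
    have hb2 : b lam ∈ Submodule.span ℂ (S' lam) := by
      rw [← hb1, hff]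
      exact (memJ' lam _).1 (Ideal.mul_mem_right (b lam) (J' lam) (hfmem' lam))
    rw [hS'] at hb2
    exact absurd (b.self_mem_span_image.1 hb2) (lt_irrefl lam)
  set s : H := ∑ κ, e κ with hs_def
  have hse : ∀ lam, s * e lam = e lam := by
    intro lam
    rw [hs_def, Finset.sum_mul]
    rw [Finset.sum_eq_single lam (fun i _ hi => horth i lam hi) (fun h => absurd (Finset.mem_univ lam) h)]
    exact hidem lam
  have hfix : ∀ lam, ∀ x ∈ Submodule.span ℂ (S lam), s * x = x := by
    intro lam
    induction lam using WellFoundedLT.induction with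
    | ind lam IH =>
      intro x hx
      have h' : ∀ y ∈ Submodule.span ℂ (S' lam), s * y = y := by
        intro y hy
        have hKle : Submodule.span ℂ (S' lam) ≤
            LinearMap.eqLocus (LinearMap.mulLeft ℂ s) LinearMap.id := by
          refine Submodule.span_le.2 ?_
          rintro _ ⟨ν, hν, rfl⟩
          show s * b ν = b ν
          exact IH ν hν (b ν) (hself ν)
        exact hKle hy
      have h2 : s * (f' lam * x) = f' lam * x :=
        h' _ ((memJ' lam _).1 (Ideal.mul_mem_right x (J' lam) (hfmem' lam)))
      have h3 : s * (f lam - f' lam) = f lam - f' lam := hse lam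
      have h4 : f lam * x = x := hfgen lam x ((memJ lam x).2 hx)
      linear_combination x * h3 + h2 + (1 - s) * h4
  have hsum1 : s = 1 := by
    have hle : (⊤ : Submodule ℂ H) ≤
        LinearMap.eqLocus (LinearMap.mulLeft ℂ s) LinearMap.id := by
      rw [← b.span_eq]
      refine Submodule.span_le.2 ?_
      rintro _ ⟨ν, rfl⟩
      show s * b ν = b ν
      exact hfix ν (b ν) (hself ν)
    have h1 : s * 1 = 1 := hle (Submodule.mem_top : (1:H) ∈ ⊤)
    rwa [mul_one] at h1
  -- e is a basis
  have hli : LinearIndependent ℂ e := by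
    rw [Fintype.linearIndependent_iff]
    intro g hg i
    have : e i * ∑ j, g j • e j = 0 := by rw [hg, mul_zero]
    rw [Finset.mul_sum] at this
    simp_rw [mul_smul_comm] at this
    rw [Finset.sum_eq_single i (fun j _ hj => by rw [horth i j (Ne.symm hj), smul_zero])
      (fun h => absurd (Finset.mem_univ i) h), hidem i] at this
    exact (smul_eq_zero.1 this).resolve_right (hne0 i)
  have hcard : Fintype.card Λ = Module.finrank ℂ H := (Module.finrank_eq_card_basis b).symm
  let eb : Module.Basis Λ ℂ H := basisOfLinearIndependentOfCardEqFinrank hli hcard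
  have hcoe : ⇑eb = e := coe_basisOfLinearIndependentOfCardEqFinrank hli hcard
  refine ⟨e, hidem, horth, hsum1, hne0, ?_⟩
  intro lam
  have hrep : b lam = ∑ ν, eb.repr (b lam) ν • e ν := by
    conv_lhs => rw [← eb.sum_repr (b lam)]
    simp [hcoe]
  have hterm : ∀ ν, e ν * b lam = eb.repr (b lam) ν • e ν := by
    intro ν
    conv_lhs => rw [hrep]
    rw [Finset.mul_sum]
    simp_rw [mul_smul_comm]
    rw [Finset.sum_eq_single ν (fun j _ hj => by rw [horth ν j (Ne.symm hj), smul_zero])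
      (fun h => absurd (Finset.mem_univ ν) h), hidem ν]
  have hzero : ∀ ν, ¬ ν ≤ lam → eb.repr (b lam) ν • e ν = 0 := by
    intro ν hν
    have hp := hprod ν lam (b lam) (hself lam)
    have hp' : e ν * b lam ∈ Submodule.span ℂ (S' ν) := by
      rw [hS']
      refine Submodule.span_le.2 ?_ hp
      rintro _ ⟨κ, ⟨h1, h2⟩, rfl⟩
      refine Submodule.subset_span ⟨κ, lt_of_le_of_ne h1 ?_, rfl⟩
      rintro rfl; exact hν h2
    have h0 : e ν * (e ν * b lam) = 0 := hkill ν _ hp'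
    have h1 : e ν * (e ν * b lam) = e ν * b lam := by
      rw [← mul_assoc, hidem ν]
    rw [← hterm ν, ← h1, h0]
  rw [hrep]
  refine Submodule.sum_mem _ ?_
  intro ν _
  by_cases hν : ν ≤ lam
  · exact Submodule.smul_mem _ _ (Submodule.subset_span ⟨ν, hν, rfl⟩)
  · rw [hzero ν hν]; exact Submodule.zero_mem _
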